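/- Let β > 1 and H = βL_p. Let x ∈ dom h and let T be a minimizer over E of y ↦ Ω_p(f,x;y) + (H/(p+1)!)‖y−x‖^{p+1} + h(y), and set F'(T) = ∇f(T) − ∇Ω_p(f,x;T) − (H/p!)‖T−x‖^{p−1}(T−x). Then ⟨F'(T), x − T⟩ ≥ (p!/((p+1)L_p))^{1/p} · ‖F'(T)‖^{(p+1)/p} · ((β²−1)^{(p−1)/(2p)}/β) · (p/(p²−1)^{(p−1)/(2p)}). -/

import Mathlib

open scoped RealInnerProductSpace

/-- The `p`-th order Taylor polynomial `Ω_p(f,x;y)` of `f` at `x`, evaluated at `y`. -/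
noncomputable def OmegaTaylor {E : Type*} [NormedAddCommGroup E] [InnerProductSpace ℝ E]
    (p : ℕ) (f : E → ℝ) (x y : E) : ℝ :=
  ∑ k ∈ Finset.range (p + 1),
    (1 / (Nat.factorial k : ℝ)) * iteratedFDeriv ℝ k f x (fun _ => y - x)

set_option linter.unusedSectionVars false
set_option linter.unusedVariables false
set_option maxHeartbeats 1000000

open Set Function



universe uE uF


section Sym

variable {E : Type uE} [NormedAddCommGroup E] [NormedSpace ℝ E]

theorem swap_last_two {F : Type uF} [NormedAddCommGroup F] [NormedSpace ℝ F]
    {f : E → F} {U : Set E} (hU : IsOpen U) {n j : ℕ} (hf : ContDiffOn ℝ (n : ℕ∞) f U)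
    (hn : j + 2 ≤ n) {z : E} (hz : z ∈ U) (m : Fin j → E) (a b : E) :
    iteratedFDeriv ℝ (j + 2) f z (Fin.snoc (Fin.snoc m a) b) =
      iteratedFDeriv ℝ (j + 2) f z (Fin.snoc (Fin.snoc m b) a) := by
  have h1 : ∀ c d : E,
      iteratedFDeriv ℝ (j + 2) f z (Fin.snoc (Fin.snoc m c) d) =
        iteratedFDeriv ℝ j (fun w => fderiv ℝ (fderiv ℝ f) w) z m c d := by
    intro c d
    rw [iteratedFDeriv_succ_apply_right]
    simp only [Fin.init_snoc, Fin.snoc_last]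
    rw [iteratedFDeriv_succ_apply_right]
    simp only [Fin.init_snoc, Fin.snoc_last]
  rw [h1, h1]
  set H := fun w => fderiv ℝ (fderiv ℝ f) w with hHdef
  have hsym : ∀ w ∈ U, ∀ u v : E, H w u v = H w v u := by
    intro w hw u v
    have hcd : ContDiffAt ℝ (n : ℕ∞) f w := hf.contDiffAt (hU.mem_nhds hw)
    have h2n : (2 : WithTop ℕ∞) ≤ ((n : ℕ∞) : WithTop ℕ∞) := by
      have h : (2 : ℕ) ≤ n := by omega
      have := WithTop.coe_le_coe.mpr (show ((2:ℕ):ℕ∞) ≤ ((n:ℕ):ℕ∞) by exact_mod_cast h)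
      simpa using this
    exact (hcd.isSymmSndFDerivAt (by simpa using h2n)).eq u v
  have hUU : UniqueDiffOn ℝ U := hU.uniqueDiffOn
  let e : (E →L[ℝ] E →L[ℝ] F) ≃L[ℝ] (E →L[ℝ] E →L[ℝ] F) :=
    (ContinuousLinearMap.flipₗᵢ ℝ E E F).toContinuousLinearEquiv
  have hHH : EqOn (⇑e ∘ H) H U := by
    intro w hw
    ext u v
    exact hsym w hw v u
  calc iteratedFDeriv ℝ j H z m a b
      = iteratedFDerivWithin ℝ j H U z m a b := by
        rw [iteratedFDerivWithin_of_isOpen j hU hz]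
    _ = iteratedFDerivWithin ℝ j (⇑e ∘ H) U z m a b := by
        rw [iteratedFDerivWithin_congr hHH hz j]
    _ = e (iteratedFDerivWithin ℝ j H U z m) a b := by
        have hcomp := ContinuousLinearEquiv.iteratedFDerivWithin_comp_left
          (𝕜 := ℝ) (E := E) (F := E →L[ℝ] E →L[ℝ] F) (G := E →L[ℝ] E →L[ℝ] F) e H hUU hz j
        rw [hcomp]
        rfl
    _ = iteratedFDerivWithin ℝ j H U z m b a := rfl
    _ = iteratedFDeriv ℝ j H z m b a := by
        rw [iteratedFDerivWithin_of_isOpen j hU hz]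

end Sym


section Move

variable {E : Type uE} [NormedAddCommGroup E] [NormedSpace ℝ E]

theorem update_const_last {k : ℕ} (d v : E) :
    Function.update (fun _ : Fin (k+1) => d) (Fin.last k) v
      = Fin.snoc (fun _ : Fin k => d) v := by
  funext j
  induction j using Fin.lastCases with
  | last => simp
  | cast i => simp [Function.update_of_ne (Fin.castSucc_lt_last i).ne]

theorem snoc_const_self {k : ℕ} (d : E) :
    (Fin.snoc (fun _ : Fin k => d) d) = fun _ : Fin (k+1) => d := by
  funext j
  induction j using Fin.lastCases with
  | last => simp
  | cast i => simp

theorem init_update_castSucc' {k : ℕ} (g : Fin (k+1) → E) (i : Fin k) (v : E) :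
    Fin.init (Function.update g i.castSucc v) = Function.update (Fin.init g) i v := by
  funext j
  by_cases h : j = i
  · subst h
    simp [Fin.init]
  · have h' : j.castSucc ≠ i.castSucc := fun hc => h (Fin.castSucc_injective _ hc)
    simp [Fin.init, Function.update_of_ne h, Function.update_of_ne h']

theorem cons_snoc_const {k : ℕ} (d v : E) :
    Fin.cons d (Fin.snoc (fun _ : Fin k => d) v)
      = (Fin.snoc (fun _ : Fin (k+1) => d) v : Fin (k+2) → E) := by
  funext j
  induction j using Fin.lastCases with
  | last =>
    have : Fin.last (k+1) = Fin.succ (Fin.last k) := rfl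
    rw [this, Fin.cons_succ]
    simp
  | cast i =>
    induction i using Fin.cases with
    | zero =>
      rw [show ((0 : Fin (k+1)).castSucc) = (0 : Fin (k+2)) from rfl, Fin.cons_zero,
        show (0 : Fin (k+2)) = Fin.castSucc (0 : Fin (k+1)) from rfl, Fin.snoc_castSucc]
    | succ ii =>
      rw [show (ii.succ.castSucc : Fin (k+2)) = ii.castSucc.succ from (Fin.succ_castSucc ii).symm,
        Fin.cons_succ, Fin.snoc_castSucc, Fin.succ_castSucc, Fin.snoc_castSucc]

end Move

section Move2

variable {E : Type uE} [NormedAddCommGroup E] [NormedSpace ℝ E]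

theorem move_last_aux :
    ∀ (k : ℕ) {F : Type (max uE uF)} [NormedAddCommGroup F] [NormedSpace ℝ F]
      {f : E → F} {U : Set E} (hU : IsOpen U) {n : ℕ} (hf : ContDiffOn ℝ (n : ℕ∞) f U)
      (hkn : k + 1 ≤ n) {z : E} (hz : z ∈ U) (d v : E) (i : Fin (k+1)),
      iteratedFDeriv ℝ (k+1) f z (Function.update (fun _ => d) i v) =
        iteratedFDeriv ℝ (k+1) f z (Fin.snoc (fun _ : Fin k => d) v) := by
  intro k
  induction k with
  | zero =>
    intro F _ _ f U hU n hf hkn z hz d v i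
    have hi : i = Fin.last 0 := Fin.ext (by omega)
    rw [hi, update_const_last]
  | succ k IH0 =>
    intro F _ _ f U hU n hf hkn z hz d v i
    rcases eq_or_ne i (Fin.last (k+1)) with hi | hi
    · rw [hi, update_const_last]
    · obtain ⟨i', rfl⟩ : ∃ i' : Fin (k+1), i = i'.castSucc :=
        ⟨i.castPred hi, (Fin.castSucc_castPred i hi).symm⟩
      have hn1 : (((n-1 : ℕ) : ℕ∞) : WithTop ℕ∞) + 1 ≤ ((n : ℕ∞) : WithTop ℕ∞) := by
        have h : (n - 1) + 1 = n := by omega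
        exact_mod_cast Nat.le_of_eq h
      have hg : ContDiffOn ℝ (((n-1 : ℕ) : ℕ∞)) (fderiv ℝ f) U :=
        hf.fderiv_of_isOpen hU hn1
      have e2 : (Function.update (fun _ : Fin (k+2) => d) i'.castSucc v) (Fin.last (k+1)) = d :=
        Function.update_of_ne (Fin.castSucc_lt_last i').ne' _ _
      have h1 : iteratedFDeriv ℝ (k+2) f z (Function.update (fun _ => d) i'.castSucc v)
          = (iteratedFDeriv ℝ (k+1) (fderiv ℝ f) z (Function.update (fun _ => d) i' v)) d := by
        rw [iteratedFDeriv_succ_apply_right, e2, init_update_castSucc']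
        rfl
      have IH := IH0 (F := E →L[ℝ] F) hU hg (by omega) hz d v i'
      have h2 : iteratedFDeriv ℝ (k+2) f z (Fin.snoc (Fin.snoc (fun _ : Fin k => d) v) d)
          = (iteratedFDeriv ℝ (k+1) (fderiv ℝ f) z (Fin.snoc (fun _ : Fin k => d) v)) d := by
        rw [iteratedFDeriv_succ_apply_right]
        simp only [Fin.init_snoc, Fin.snoc_last]
      have h3 := swap_last_two hU hf (by omega) hz (fun _ : Fin k => d) v d
      rw [h1, IH, ← h2, h3, snoc_const_self]

theorem move_last_real {f : E → ℝ} {U : Set E} (hU : IsOpen U) {n : ℕ}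
    (hf : ContDiffOn ℝ (n : ℕ∞) f U) {k : ℕ} (hkn : k + 1 ≤ n) {z : E} (hz : z ∈ U)
    (d v : E) (i : Fin (k+1)) :
    iteratedFDeriv ℝ (k+1) f z (Function.update (fun _ => d) i v) =
      iteratedFDeriv ℝ (k+1) f z (Fin.snoc (fun _ : Fin k => d) v) := by
  let e : ℝ ≃L[ℝ] ULift.{uE} ℝ := ContinuousLinearEquiv.ulift.symm
  have hcomp : ∀ m : Fin (k+1) → E,
      iteratedFDeriv ℝ (k+1) (⇑e ∘ f) z m = e (iteratedFDeriv ℝ (k+1) f z m) := by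
    intro m
    have h1 := ContinuousLinearEquiv.iteratedFDerivWithin_comp_left
      (𝕜 := ℝ) (E := E) (F := ℝ) (G := ULift.{uE} ℝ) e f hU.uniqueDiffOn hz (k+1)
    have h2 := iteratedFDerivWithin_of_isOpen (𝕜 := ℝ) (f := f) (E := E) (F := ℝ) (k+1) hU hz
    have h3 := iteratedFDerivWithin_of_isOpen (𝕜 := ℝ) (f := ⇑e ∘ f) (E := E)
      (F := ULift.{uE} ℝ) (k+1) hU hz
    rw [← h3, h1, h2]
    rfl
  have hfe : ContDiffOn ℝ (n : ℕ∞) (⇑e ∘ f) U := by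
    have := (e : ℝ →L[ℝ] ULift.{uE} ℝ).contDiff.comp_contDiffOn (n := (n : ℕ∞)) hf
    simpa using this
  have key := move_last_aux.{uE, uE} k (F := ULift.{uE} ℝ) hU hfe hkn hz d v i
  rw [hcomp, hcomp] at key
  exact e.injective key

end Move2

section Taylor

variable {E : Type uE} [NormedAddCommGroup E] [NormedSpace ℝ E]

theorem grad_taylor_bound {f : E → ℝ} {U s : Set E} (hU : IsOpen U) (hsU : s ⊆ U)
    (hs : Convex ℝ s) {p : ℕ} (hp : 1 ≤ p) (hf : ContDiffOn ℝ (p : ℕ∞) f U)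
    {L : ℝ}
    (hLip : ∀ z ∈ s, ∀ w ∈ s, ‖iteratedFDeriv ℝ p f z - iteratedFDeriv ℝ p f w‖ ≤ L * ‖z - w‖)
    {x T : E} (hx : x ∈ s) (hT : T ∈ s) (v : E) :
    |fderiv ℝ f T v - ∑ k ∈ Finset.range p, (1 / (Nat.factorial k : ℝ)) *
        iteratedFDeriv ℝ (k+1) f x (Fin.snoc (fun _ : Fin k => T - x) v)| ≤
      L * ‖T - x‖ ^ p * ‖v‖ / (Nat.factorial p : ℝ) := by
  classical
  set d := T - x with hd
  set γ : ℝ → E := fun t => x + t • d with hγ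
  have hγ0 : γ 0 = x := by simp [hγ]
  have hγ1 : γ 1 = T := by simp [hγ, hd]
  have hγs : ∀ t ∈ Icc (0:ℝ) 1, γ t ∈ s := fun t ht => hs.add_smul_sub_mem hx hT ht
  have hγU : ∀ t ∈ Icc (0:ℝ) 1, γ t ∈ U := fun t ht => hsU (hγs t ht)
  set χ : ℕ → ℝ → ℝ := fun j t =>
    iteratedFDeriv ℝ (j+1) f (γ t) (Fin.snoc (fun _ : Fin j => d) v) with hχ
  set c : ℕ → ℝ := fun j => χ j 0 with hc
  set P : ℕ → ℝ → ℝ := fun j t =>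
    ∑ i ∈ Finset.range (p - j), t ^ i * (c (i + j) / (Nat.factorial i : ℝ)) with hP
  set M : ℝ := L * ‖d‖ ^ p * ‖v‖ with hM
  -- derivative of χ j
  have hderiv : ∀ j, j + 2 ≤ p → ∀ t ∈ Icc (0:ℝ) 1, HasDerivAt (χ j) (χ (j+1) t) t := by
    intro j hj t ht
    have hmem : γ t ∈ U := hγU t ht
    have hγd : HasDerivAt γ d t := by
      have h1 : HasDerivAt (fun u : ℝ => u • d) ((1:ℝ) • d) t := (hasDerivAt_id t).smul_const d
      exact (by simpa using h1 : HasDerivAt (fun u : ℝ => u • d) d t).const_add x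
    have hca : ContDiffAt ℝ (p : ℕ∞) f (γ t) := hf.contDiffAt (hU.mem_nhds hmem)
    have hdiff : DifferentiableAt ℝ (iteratedFDeriv ℝ (j+1) f) (γ t) := by
      have h1 : ContDiffAt ℝ 1 (iteratedFDeriv ℝ (j+1) f) (γ t) := by
        apply hca.iteratedFDeriv_right
        have h2 : ((1 + (j+1) : ℕ) : WithTop ℕ∞) ≤ ((p : ℕ∞) : WithTop ℕ∞) := by
          exact_mod_cast (by omega : 1 + (j+1) ≤ p)
        simpa using h2
      exact h1.differentiableAt one_ne_zero
    have h2 := (hdiff.hasFDerivAt.continuousMultilinear_apply_const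
      (Fin.snoc (fun _ : Fin j => d) v)).comp_hasDerivAt t hγd
    have hval : χ (j+1) t
        = ((fderiv ℝ (iteratedFDeriv ℝ (j+1) f) (γ t)).flipMultilinear
            (Fin.snoc (fun _ : Fin j => d) v)) d := by
      have hM2 := cons_snoc_const (E := E) (k := j) d v
      calc χ (j+1) t = iteratedFDeriv ℝ (j+2) f (γ t)
            (Fin.cons d (Fin.snoc (fun _ : Fin j => d) v)) := by
              simp only [hχ]
              rw [hM2]
        _ = _ := by
            rw [iteratedFDeriv_succ_apply_left]
            simp [ContinuousLinearMap.flipMultilinear_apply_apply]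
    rw [hval]
    exact h2
  -- derivative of P j
  have hPd : ∀ j, ∀ t : ℝ, HasDerivAt (P j) (P (j+1) t) t := by
    intro j t
    have h1 : HasDerivAt (fun u : ℝ => ∑ i ∈ Finset.range (p - j),
          u ^ i * (c (i + j) / (Nat.factorial i : ℝ)))
        (∑ i ∈ Finset.range (p - j),
          (i : ℝ) * t ^ (i - 1) * (c (i + j) / (Nat.factorial i : ℝ))) t := by
      apply HasDerivAt.fun_sum
      intro i _
      simpa using (hasDerivAt_pow i t).mul_const (c (i + j) / (Nat.factorial i : ℝ))
    have h2 : (∑ i ∈ Finset.range (p - j),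
          (i : ℝ) * t ^ (i - 1) * (c (i + j) / (Nat.factorial i : ℝ))) = P (j+1) t := by
      simp only [hP]
      rcases Nat.eq_zero_or_pos (p - j) with hm | hm
      · have hm1 : p - (j+1) = 0 := by omega
        simp only [hm, hm1, Finset.range_zero, Finset.sum_empty]
      · obtain ⟨m, hm'⟩ : ∃ m, p - j = m + 1 := ⟨p - j - 1, by omega⟩
        have hj1 : p - (j+1) = m := by omega
        rw [hm', hj1, Finset.sum_range_succ']
        simp only [Nat.cast_zero, zero_mul, mul_zero, add_zero, Nat.cast_add, Nat.cast_one]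
        apply Finset.sum_congr rfl
        intro i _
        have hfac : ((Nat.factorial (i+1) : ℝ)) = ((i:ℝ)+1) * (Nat.factorial i : ℝ) := by
          rw [Nat.factorial_succ]; push_cast; ring
        have hidx : i + 1 + j = i + (j + 1) := by omega
        rw [hidx, Nat.add_sub_cancel, hfac]
        have hfi : (Nat.factorial i : ℝ) ≠ 0 := by
          exact_mod_cast (Nat.factorial_pos i).ne'
        field_simp
    rw [← h2]
    exact h1
  -- P j 0 = c j  (for j < p)
  have hP0 : ∀ j, j < p → ∀ t : ℝ, t = 0 → P j t = c j := by
    intro j hj t ht0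
    obtain ⟨m, hm'⟩ : ∃ m, p - j = m + 1 := ⟨p - j - 1, by omega⟩
    simp only [hP, hm', ht0, Finset.sum_range_succ']
    simp
  -- main induction
  have main : ∀ q j, j + (q + 1) = p → ∀ t ∈ Icc (0:ℝ) 1,
      |χ j t - P j t| ≤ M * t ^ (q+1) / (Nat.factorial (q+1) : ℝ) := by
    intro q
    induction q with
    | zero =>
      intro j hj t ht
      have hj1 : j + 1 = p := by omega
      have hPc : P j t = c j := by
        have hpj : p - j = 1 := by omega
        simp only [hP, hpj, Finset.sum_range_one]
        simp
      rw [hPc]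
      have hsub : χ j t - c j = (iteratedFDeriv ℝ (j+1) f (γ t)
          - iteratedFDeriv ℝ (j+1) f (γ 0)) (Fin.snoc (fun _ : Fin j => d) v) := by
        simp only [hc, hχ, ContinuousMultilinearMap.sub_apply]
      have hprod : (∏ i2 : Fin (j+1), ‖(Fin.snoc (fun _ : Fin j => d) v : Fin (j+1) → E) i2‖)
          = ‖d‖ ^ j * ‖v‖ := by
        rw [Fin.prod_univ_castSucc]
        simp
      have hnorm : ‖iteratedFDeriv ℝ (j+1) f (γ t) - iteratedFDeriv ℝ (j+1) f (γ 0)‖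
          ≤ L * (t * ‖d‖) := by
        have h5 : ‖γ t - x‖ = t * ‖d‖ := by
          simp only [hγ, add_sub_cancel_left]
          rw [norm_smul, Real.norm_eq_abs, abs_of_nonneg ht.1]
        have h6 := hLip (γ t) (hγs t ht) x hx
        rw [h5] at h6
        rw [hγ0]
        calc ‖iteratedFDeriv ℝ (j+1) f (γ t) - iteratedFDeriv ℝ (j+1) f x‖
            = ‖iteratedFDeriv ℝ p f (γ t) - iteratedFDeriv ℝ p f x‖ := by rw [hj1]
          _ ≤ L * (t * ‖d‖) := h6
      calc |χ j t - c j| = ‖(iteratedFDeriv ℝ (j+1) f (γ t)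
            - iteratedFDeriv ℝ (j+1) f (γ 0)) (Fin.snoc (fun _ : Fin j => d) v)‖ := by
            rw [hsub]
            exact (Real.norm_eq_abs _).symm
        _ ≤ ‖iteratedFDeriv ℝ (j+1) f (γ t) - iteratedFDeriv ℝ (j+1) f (γ 0)‖
              * (‖d‖ ^ j * ‖v‖) := by
            rw [← hprod]
            exact ContinuousMultilinearMap.le_opNorm _ _
        _ ≤ (L * (t * ‖d‖)) * (‖d‖ ^ j * ‖v‖) :=
            mul_le_mul_of_nonneg_right hnorm (by positivity)
        _ = M * t ^ (0+1) / (Nat.factorial (0+1) : ℝ) := by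
            have hdp : ‖d‖ * ‖d‖ ^ j = ‖d‖ ^ p := by
              rw [← pow_succ', hj1]
            rw [hM, show ((Nat.factorial (0+1) : ℝ)) = 1 by norm_num [Nat.factorial],
              div_one, pow_one, ← hdp]
            ring
    | succ q IHq =>
      intro j hj t ht
      have hstep : ∀ u ∈ Icc (0:ℝ) 1,
          HasDerivAt (fun w => χ j w - P j w) (χ (j+1) u - P (j+1) u) u := by
        intro u hu
        exact (hderiv j (by omega) u hu).sub (hPd j u)
      have hbound : ∀ u ∈ Ico (0:ℝ) 1,
          ‖χ (j+1) u - P (j+1) u‖ ≤ M * u ^ (q+1) / (Nat.factorial (q+1) : ℝ) := by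
        intro u hu
        rw [Real.norm_eq_abs]
        exact IHq (j+1) (by omega) u ⟨hu.1, le_of_lt hu.2⟩
      have hB : ∀ u : ℝ, HasDerivAt (fun w : ℝ => M * w ^ (q+2) / (Nat.factorial (q+2) : ℝ))
          (M * u ^ (q+1) / (Nat.factorial (q+1) : ℝ)) u := by
        intro u
        have h1 := ((hasDerivAt_pow (q+2) u).const_mul M).div_const ((Nat.factorial (q+2) : ℝ))
        refine h1.congr_deriv ?_
        have hfac : ((Nat.factorial (q+2) : ℝ)) = ((q:ℝ)+2) * (Nat.factorial (q+1) : ℝ) := by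
          rw [Nat.factorial_succ]; push_cast; ring
        have hf1 : (Nat.factorial (q+1) : ℝ) ≠ 0 := by
          exact_mod_cast (Nat.factorial_pos (q+1)).ne'
        rw [hfac, show (q + 2 : ℕ) - 1 = q + 1 from by omega]
        push_cast
        field_simp
      have h0 : ‖χ j 0 - P j 0‖ ≤ M * (0:ℝ) ^ (q+2) / (Nat.factorial (q+2) : ℝ) := by
        rw [hP0 j (by omega) 0 rfl]
        simp [hc]
      have hres := image_norm_le_of_norm_deriv_right_le_deriv_boundary
        (f := fun w => χ j w - P j w) (f' := fun u => χ (j+1) u - P (j+1) u)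
        (a := 0) (b := 1)
        (fun u hu => (hstep u hu).continuousAt.continuousWithinAt)
        (fun u hu => (hstep u ⟨hu.1, hu.2.le⟩).hasDerivWithinAt)
        h0 hB hbound
      have hres2 := hres ht
      rw [Real.norm_eq_abs] at hres2
      exact hres2
  -- conclude
  have hfin := main (p-1) 0 (by omega) 1 ⟨zero_le_one, le_rfl⟩
  have hpp : p - 1 + 1 = p := by omega
  rw [hpp] at hfin
  have hχ01 : χ 0 1 = fderiv ℝ f T v := by
    simp only [hχ]
    rw [hγ1, iteratedFDeriv_one_apply]
    congr 1
  have hP01 : P 0 1 = ∑ k ∈ Finset.range p, (1 / (Nat.factorial k : ℝ)) *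
      iteratedFDeriv ℝ (k+1) f x (Fin.snoc (fun _ : Fin k => T - x) v) := by
    simp only [hP, Nat.sub_zero, one_pow, Nat.add_zero]
    apply Finset.sum_congr rfl
    intro i _
    simp only [hc, hχ, hγ0, hd]
    ring
  rw [← hχ01, ← hP01]
  calc |χ 0 1 - P 0 1| ≤ M * 1 ^ p / (Nat.factorial p : ℝ) := hfin
    _ = L * ‖T - x‖ ^ p * ‖v‖ / (Nat.factorial p : ℝ) := by rw [hM, hd]; ring

end Taylor

section OmegaDeriv

variable {E : Type uE} [NormedAddCommGroup E] [InnerProductSpace ℝ E]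

theorem omega_hasFDerivAt {f : E → ℝ} {p : ℕ} (x T : E) :
    HasFDerivAt (fun z => OmegaTaylor p f x z)
      (∑ k ∈ Finset.range (p+1), (1 / (Nat.factorial k : ℝ)) •
        (∑ i : Fin k, ((iteratedFDeriv ℝ k f x).toContinuousLinearMap (fun _ => T - x) i)
          ∘L (ContinuousLinearMap.id ℝ E))) T := by
  classical
  have hterm : ∀ k, HasFDerivAt (fun z => iteratedFDeriv ℝ k f x (fun _ => z - x))
      (∑ i : Fin k, ((iteratedFDeriv ℝ k f x).toContinuousLinearMap (fun _ => T - x) i)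
        ∘L (ContinuousLinearMap.id ℝ E)) T := by
    intro k
    have hg : ∀ _i : Fin k, HasFDerivAt (fun z : E => z - x) (ContinuousLinearMap.id ℝ E) T :=
      fun _i => (hasFDerivAt_id T).sub_const x
    exact HasFDerivAt.multilinear_comp (iteratedFDeriv ℝ k f x) hg
  have hsum := HasFDerivAt.sum (fun k (_ : k ∈ Finset.range (p+1)) =>
    (hterm k).const_mul ((1 : ℝ) / (Nat.factorial k : ℝ)))
  refine hsum.congr_of_eventuallyEq (Filter.Eventually.of_forall fun z => ?_)
  simp [OmegaTaylor, Finset.sum_apply]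

theorem omega_fderiv_apply {f : E → ℝ} {U : Set E} (hU : IsOpen U) {p : ℕ}
    (hf : ContDiffOn ℝ (p : ℕ∞) f U) {x : E} (hx : x ∈ U) (T v : E) :
    fderiv ℝ (fun z => OmegaTaylor p f x z) T v
      = ∑ k ∈ Finset.range p, (1 / (Nat.factorial k : ℝ)) *
          iteratedFDeriv ℝ (k+1) f x (Fin.snoc (fun _ : Fin k => T - x) v) := by
  classical
  rw [(omega_hasFDerivAt x T).fderiv]
  rw [ContinuousLinearMap.sum_apply]
  have hterm : ∀ k ∈ Finset.range (p+1), (((1 : ℝ) / (Nat.factorial k : ℝ)) •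
      (∑ i : Fin k, ((iteratedFDeriv ℝ k f x).toContinuousLinearMap (fun _ => T - x) i)
        ∘L (ContinuousLinearMap.id ℝ E))) v
      = (1 / (Nat.factorial k : ℝ)) * ∑ i : Fin k,
          iteratedFDeriv ℝ k f x (Function.update (fun _ => T - x) i v) := by
    intro k _
    rw [ContinuousLinearMap.smul_apply, ContinuousLinearMap.sum_apply]
    simp [ContinuousMultilinearMap.toContinuousLinearMap]
  rw [Finset.sum_congr rfl hterm, Finset.sum_range_succ']
  have h0 : (1 / (Nat.factorial 0 : ℝ)) * ∑ i : Fin 0,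
      iteratedFDeriv ℝ 0 f x (Function.update (fun _ => T - x) i v) = 0 := by
    simp
  rw [h0, add_zero]
  apply Finset.sum_congr rfl
  intro k hk
  have hkp : k + 1 ≤ p := by
    have := Finset.mem_range.mp hk
    omega
  have hmv : ∀ i : Fin (k+1), iteratedFDeriv ℝ (k+1) f x (Function.update (fun _ => T - x) i v)
      = iteratedFDeriv ℝ (k+1) f x (Fin.snoc (fun _ : Fin k => T - x) v) :=
    fun i => move_last_real hU hf hkp hx (T - x) v i
  rw [Finset.sum_congr rfl (fun i _ => hmv i), Finset.sum_const, Finset.card_univ,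
    Fintype.card_fin, nsmul_eq_mul]
  have hfac : ((Nat.factorial (k+1) : ℝ)) = ((k:ℝ)+1) * (Nat.factorial k : ℝ) := by
    rw [Nat.factorial_succ]; push_cast; ring
  rw [hfac]
  have hfk : (Nat.factorial k : ℝ) ≠ 0 := by exact_mod_cast (Nat.factorial_pos k).ne'
  push_cast
  field_simp

end OmegaDeriv


/-- Lemma 2.1 of the paper: for `H = βL_p` with `β > 1` and `T` a step of the
Regularized Composite Tensor Method from `x`, with
`F'(T) = ∇f(T) − ∇Ω_p(f,x;T) − (H/p!)‖T−x‖^{p−1}(T−x)`, one has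
`⟨F'(T), x − T⟩ ≥ (p!/((p+1)L_p))^{1/p} ‖F'(T)‖^{(p+1)/p} ((β²−1)^{(p−1)/(2p)}/β) (p/(p²−1)^{(p−1)/(2p)})`. -/
theorem rcts_step_decrease_general
    {E : Type*} [NormedAddCommGroup E] [InnerProductSpace ℝ E] [FiniteDimensional ℝ E]
    (p : ℕ) (hp : 2 ≤ p) (f h : E → ℝ) (domh U : Set E)
    (hdomcl : IsClosed domh) (hU : IsOpen U) (hUconv : Convex ℝ U) (hsub : domh ⊆ U)
    (hf : ContDiffOn ℝ (p : ℕ∞) f U) (hfconv : ConvexOn ℝ U f)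
    (hhconv : ConvexOn ℝ domh h) (hhlsc : LowerSemicontinuousOn h domh)
    (Lp H β : ℝ) (hLp : 0 < Lp) (hβ : 1 < β) (hH : H = β * Lp)
    (hLip : ∀ z ∈ domh, ∀ w ∈ domh,
      ‖iteratedFDeriv ℝ p f z - iteratedFDeriv ℝ p f w‖ ≤ Lp * ‖z - w‖)
    (x : E) (hx : x ∈ domh) (T : E) (hT : T ∈ domh)
    (hmin : ∀ y ∈ domh,
      OmegaTaylor p f x T + H / (Nat.factorial (p + 1) : ℝ) * ‖T - x‖ ^ (p + 1) + h T ≤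
        OmegaTaylor p f x y + H / (Nat.factorial (p + 1) : ℝ) * ‖y - x‖ ^ (p + 1) + h y)
    (FT : E)
    (hFTdef : FT = gradient f T - gradient (fun z => OmegaTaylor p f x z) T
        - (H / (Nat.factorial p : ℝ) * ‖T - x‖ ^ (p - 1)) • (T - x)) :
    ((Nat.factorial p : ℝ) / (((p : ℝ) + 1) * Lp)) ^ ((1 : ℝ) / p) * ‖FT‖ ^ (((p : ℝ) + 1) / p)
        * ((β ^ 2 - 1) ^ (((p : ℝ) - 1) / (2 * (p : ℝ))) / β)
        * ((p : ℝ) / ((p : ℝ) ^ 2 - 1) ^ (((p : ℝ) - 1) / (2 * (p : ℝ))))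
      ≤ ⟪FT, x - T⟫ := by
  classical
  have hβ0 : (0:ℝ) < β := lt_trans one_pos hβ
  have hβne : β ≠ 0 := hβ0.ne'
  have hH0 : 0 < H := by rw [hH]; positivity
  have hLpne : Lp ≠ 0 := hLp.ne'
  have hpR : (0:ℝ) < (p:ℝ) := by exact_mod_cast (by omega : 0 < p)
  have hpRne : (p:ℝ) ≠ 0 := hpR.ne'
  have hpR2 : (2:ℝ) ≤ (p:ℝ) := by exact_mod_cast hp
  have hp1 : (0:ℝ) < (p:ℝ) - 1 := by linarith
  have hp1ne : (p:ℝ) - 1 ≠ 0 := hp1.ne'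
  have hp1' : (0:ℝ) < (p:ℝ) + 1 := by linarith
  have hp1'ne : (p:ℝ) + 1 ≠ 0 := hp1'.ne'
  have hβsq : (0:ℝ) < β ^ 2 - 1 := by nlinarith
  have hβsqne : β ^ 2 - 1 ≠ 0 := hβsq.ne'
  have hpsq : (0:ℝ) < (p:ℝ) ^ 2 - 1 := by nlinarith
  have hpsqne : (p:ℝ) ^ 2 - 1 ≠ 0 := hpsq.ne'
  have hfacpos : (0:ℝ) < (Nat.factorial p : ℝ) := by exact_mod_cast p.factorial_pos
  have hfacne : (Nat.factorial p : ℝ) ≠ 0 := hfacpos.ne'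
  have hexpne : (((p:ℝ) + 1) / p) ≠ 0 := by positivity
  have hdomconv : Convex ℝ domh := hhconv.1
  have hTU : T ∈ U := hsub hT
  have hxU : x ∈ U := hsub hx
  set g0 : E := gradient f T - gradient (fun z => OmegaTaylor p f x z) T with hg0def
  -- inner products with g0
  have hinner : ∀ v : E, ⟪g0, v⟫ =
      fderiv ℝ f T v - fderiv ℝ (fun z => OmegaTaylor p f x z) T v := by
    intro v
    rw [hg0def, inner_sub_left]
    simp only [gradient]
    rw [InnerProductSpace.toDual_symm_apply, InnerProductSpace.toDual_symm_apply]
  have hg0bound : ‖g0‖ ≤ Lp * ‖T - x‖ ^ p / (Nat.factorial p : ℝ) := by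
    have h1 := grad_taylor_bound hU hsub hdomconv (by omega) hf hLip hx hT g0
    rw [← omega_fderiv_apply hU hf hxU T g0, ← hinner g0] at h1
    have h2 : ‖g0‖ ^ 2 ≤ Lp * ‖T - x‖ ^ p * ‖g0‖ / (Nat.factorial p : ℝ) := by
      rw [← real_inner_self_eq_norm_sq]
      exact (le_abs_self _).trans h1
    rcases eq_or_lt_of_le (norm_nonneg g0) with h0 | h0
    · rw [← h0]; positivity
    · have heq : Lp * ‖T - x‖ ^ p * ‖g0‖ / (Nat.factorial p : ℝ)
          = Lp * ‖T - x‖ ^ p / (Nat.factorial p : ℝ) * ‖g0‖ := by ring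
      rw [heq, pow_two] at h2
      exact (mul_le_mul_iff_of_pos_right h0).mp h2
  have hFT : FT = g0 - (H / (Nat.factorial p : ℝ) * ‖T - x‖ ^ (p - 1)) • (T - x) := hFTdef
  rcases eq_or_lt_of_le (norm_nonneg (T - x)) with hr0 | hr0
  · -- degenerate case T = x
    have hd0 : T - x = 0 := by
      rw [← norm_eq_zero]; exact hr0.symm
    have hg00 : g0 = 0 := by
      have hb : ‖g0‖ ≤ 0 := by
        have h2 : Lp * ‖T - x‖ ^ p / (Nat.factorial p : ℝ) = 0 := by
          rw [← hr0, zero_pow (by omega : p ≠ 0)]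
          simp
        rw [← h2]
        exact hg0bound
      exact norm_le_zero_iff.mp hb
    have hFT0 : FT = 0 := by rw [hFT, hg00, hd0, smul_zero, sub_zero]
    rw [hFT0, norm_zero, Real.zero_rpow hexpne, inner_zero_left]
    simp
  · -- main case: 0 < ‖T - x‖
    have hrne : ‖T - x‖ ≠ 0 := hr0.ne'
    have hrp1ne : ‖T - x‖ ^ (p - 1) ≠ 0 := pow_ne_zero _ hrne
    have hrp1pos : (0:ℝ) < ‖T - x‖ ^ (p - 1) := pow_pos hr0 _
    have hcpos : (0:ℝ) < H / (Nat.factorial p : ℝ) * ‖T - x‖ ^ (p - 1) := by positivity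
    have h2c : (0:ℝ) < 2 * (H / (Nat.factorial p : ℝ) * ‖T - x‖ ^ (p - 1)) := by positivity
    have hrpow : ‖T - x‖ ^ (p - 1) * ‖T - x‖ = ‖T - x‖ ^ p := by
      rw [← pow_succ, Nat.sub_add_cancel (by omega : 1 ≤ p)]
    have hrpow1 : ‖T - x‖ ^ (p - 1) * ‖T - x‖ ^ 2 = ‖T - x‖ ^ (p + 1) := by
      rw [← pow_add]
      congr 1
      omega
    have hsle : ‖g0‖ ≤ (H / (Nat.factorial p : ℝ) * ‖T - x‖ ^ (p - 1)) * ‖T - x‖ / β := by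
      have hcr : (H / (Nat.factorial p : ℝ) * ‖T - x‖ ^ (p - 1)) * ‖T - x‖ / β
          = Lp * ‖T - x‖ ^ p / (Nat.factorial p : ℝ) := by
        rw [hH, mul_assoc, hrpow]
        field_simp
      rw [hcr]
      exact hg0bound
    have hs2 : ‖g0‖ ^ 2
        ≤ (H / (Nat.factorial p : ℝ) * ‖T - x‖ ^ (p - 1)) ^ 2 * ‖T - x‖ ^ 2 / β ^ 2 := by
      calc ‖g0‖ ^ 2 ≤ ((H / (Nat.factorial p : ℝ) * ‖T - x‖ ^ (p - 1)) * ‖T - x‖ / β) ^ 2 :=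
            pow_le_pow_left₀ (norm_nonneg g0) hsle 2
        _ = _ := by rw [div_pow, mul_pow]
    have e1 : ⟪FT, x - T⟫ = -(⟪g0, T - x⟫)
        + (H / (Nat.factorial p : ℝ) * ‖T - x‖ ^ (p - 1)) * ‖T - x‖ ^ 2 := by
      rw [hFT, show x - T = -(T - x) from by abel, inner_neg_right, inner_sub_left,
        real_inner_smul_left, real_inner_self_eq_norm_sq]
      ring
    have e2 : ‖FT‖ ^ 2 = ‖g0‖ ^ 2
        - 2 * (H / (Nat.factorial p : ℝ) * ‖T - x‖ ^ (p - 1)) * ⟪g0, T - x⟫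
        + (H / (Nat.factorial p : ℝ) * ‖T - x‖ ^ (p - 1)) ^ 2 * ‖T - x‖ ^ 2 := by
      rw [hFT, norm_sub_sq_real, real_inner_smul_right, norm_smul, Real.norm_eq_abs,
        abs_of_pos hcpos, mul_pow]
      ring
    have key : ⟪FT, x - T⟫ = (‖FT‖ ^ 2 - ‖g0‖ ^ 2
        + (H / (Nat.factorial p : ℝ) * ‖T - x‖ ^ (p - 1)) ^ 2 * ‖T - x‖ ^ 2)
        / (2 * (H / (Nat.factorial p : ℝ) * ‖T - x‖ ^ (p - 1))) := by
      rw [eq_div_iff h2c.ne', e1, e2]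
      ring
    have hsplit : (‖FT‖ ^ 2
        + ((H / (Nat.factorial p : ℝ) * ‖T - x‖ ^ (p - 1)) ^ 2 * ‖T - x‖ ^ 2
          - (H / (Nat.factorial p : ℝ) * ‖T - x‖ ^ (p - 1)) ^ 2 * ‖T - x‖ ^ 2 / β ^ 2))
        / (2 * (H / (Nat.factorial p : ℝ) * ‖T - x‖ ^ (p - 1)))
        = Lp * (β ^ 2 - 1) * ‖T - x‖ ^ (p + 1) / (2 * β * (Nat.factorial p : ℝ))
          + (Nat.factorial p : ℝ) * ‖FT‖ ^ 2 / (2 * β * Lp * ‖T - x‖ ^ (p - 1)) := by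
      rw [hH, ← hrpow1]
      field_simp
      ring
    set A : ℝ := Lp * (β ^ 2 - 1) * ‖T - x‖ ^ (p + 1) / (2 * β * (Nat.factorial p : ℝ))
      with hAdef
    set B : ℝ := (Nat.factorial p : ℝ) * ‖FT‖ ^ 2 / (2 * β * Lp * ‖T - x‖ ^ (p - 1)) with hBdef
    have hABle : A + B ≤ ⟪FT, x - T⟫ := by
      rw [key, ← hsplit]
      apply (div_le_div_iff_of_pos_right h2c).mpr
      have := hs2
      linarith
    have hA0 : 0 < A := by rw [hAdef]; positivity
    rcases eq_or_lt_of_le (norm_nonneg FT) with hFTn | hFTn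
    · -- FT has norm zero
      rw [← hFTn, Real.zero_rpow hexpne]
      have hB0' : B = 0 := by rw [hBdef, ← hFTn]; simp
      have : (0:ℝ) ≤ ⟪FT, x - T⟫ := by
        refine le_trans ?_ hABle
        rw [hB0']
        linarith
      calc (↑(Nat.factorial p) / (((p:ℝ) + 1) * Lp)) ^ ((1:ℝ)/p) * 0
            * ((β ^ 2 - 1) ^ (((p:ℝ) - 1) / (2 * (p:ℝ))) / β)
            * ((p:ℝ) / ((p:ℝ) ^ 2 - 1) ^ (((p:ℝ) - 1) / (2 * (p:ℝ)))) = 0 := by ring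
        _ ≤ ⟪FT, x - T⟫ := this
    · -- main case
      have hB0 : 0 < B := by rw [hBdef]; positivity
      set θ : ℝ := ((p:ℝ) - 1) / (2 * (p:ℝ)) with hθdef
      have hθ0 : 0 < θ := by rw [hθdef]; positivity
      have h1θeq : 1 - θ = ((p:ℝ) + 1) / (2 * (p:ℝ)) := by
        rw [hθdef]
        field_simp
        ring
      have h1θ0 : 0 < 1 - θ := by rw [h1θeq]; positivity
      have hAM := Real.geom_mean_le_arith_mean2_weighted hθ0.le h1θ0.le
        (by positivity : (0:ℝ) ≤ A / θ) (by positivity : (0:ℝ) ≤ B / (1 - θ))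
        (by ring : θ + (1 - θ) = 1)
      have hLpos : 0 < (↑(Nat.factorial p) / (((p:ℝ) + 1) * Lp)) ^ ((1:ℝ)/p)
          * ‖FT‖ ^ (((p:ℝ) + 1) / p) * ((β ^ 2 - 1) ^ θ / β) * ((p:ℝ) / ((p:ℝ) ^ 2 - 1) ^ θ) := by
        positivity
      have hRpos : 0 < (A / θ) ^ θ * (B / (1 - θ)) ^ (1 - θ) := by positivity
      have hEq : (↑(Nat.factorial p) / (((p:ℝ) + 1) * Lp)) ^ ((1:ℝ)/p)
          * ‖FT‖ ^ (((p:ℝ) + 1) / p) * ((β ^ 2 - 1) ^ θ / β)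
          * ((p:ℝ) / ((p:ℝ) ^ 2 - 1) ^ θ)
          = (A / θ) ^ θ * (B / (1 - θ)) ^ (1 - θ) := by
        apply Real.log_injOn_pos (Set.mem_Ioi.2 hLpos) (Set.mem_Ioi.2 hRpos)
        rw [hAdef, hBdef, h1θeq]
        rw [show ((p:ℝ) ^ 2 - 1) = ((p:ℝ) - 1) * ((p:ℝ) + 1) from by ring]
        rw [hθdef]
        simp (disch := first | assumption | positivity) only
          [Real.log_mul, Real.log_div, Real.log_rpow, Real.log_pow]
        rw [Nat.cast_sub (by omega : 1 ≤ p)]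
        push_cast
        field_simp
        ring
      calc (↑(Nat.factorial p) / (((p:ℝ) + 1) * Lp)) ^ ((1:ℝ)/p)
          * ‖FT‖ ^ (((p:ℝ) + 1) / p) * ((β ^ 2 - 1) ^ θ / β)
          * ((p:ℝ) / ((p:ℝ) ^ 2 - 1) ^ θ)
            = (A / θ) ^ θ * (B / (1 - θ)) ^ (1 - θ) := hEq
        _ ≤ θ * (A / θ) + (1 - θ) * (B / (1 - θ)) := hAM
        _ = A + B := by field_simp
        _ ≤ ⟪FT, x - T⟫ := hABle
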